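/- Let V be an n-dimensional real inner product space (n ≥ 3), Rm an algebraic curvature tensor with curvature operator R̂ on Λ²V, and sec(P) = ⟨R̂P, P⟩ defined on the Grassmannian of 2-planes (identified with unit decomposable bivectors). If {e₁,…,e_n} is an orthonormal basis, then the 2-plane P = e₁∧e₂ is a critical point of sec if and only if Rm(e₁,e₂,e_i,e₂) = 0 and Rm(e₁,e₂,e₁,e_i) = 0 for all i = 3,…,n. -/

import Mathlib

open scoped RealInnerProductSpace

set_option synthInstance.maxHeartbeats 1000000
set_option maxHeartbeats 1000000
set_option maxSynthPendingDepth 5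

section Aux

variable {V : Type*} [NormedAddCommGroup V] [InnerProductSpace ℝ V] [FiniteDimensional ℝ V]

noncomputable def eqCLM1 : (V →ₗ[ℝ] ℝ) ≃ₗ[ℝ] (V →L[ℝ] ℝ) := LinearMap.toContinuousLinearMap

noncomputable def eqCLM2 : (V →ₗ[ℝ] V →ₗ[ℝ] ℝ) ≃ₗ[ℝ] (V →L[ℝ] V →L[ℝ] ℝ) :=
  (LinearEquiv.congrRight (eqCLM1 (V := V))).trans LinearMap.toContinuousLinearMap

noncomputable def eqCLM3 : (V →ₗ[ℝ] V →ₗ[ℝ] V →ₗ[ℝ] ℝ) ≃ₗ[ℝ] (V →L[ℝ] V →L[ℝ] V →L[ℝ] ℝ) :=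
  (LinearEquiv.congrRight (eqCLM2 (V := V))).trans LinearMap.toContinuousLinearMap

noncomputable def eqCLM4 :
    (V →ₗ[ℝ] V →ₗ[ℝ] V →ₗ[ℝ] V →ₗ[ℝ] ℝ) ≃ₗ[ℝ] (V →L[ℝ] V →L[ℝ] V →L[ℝ] V →L[ℝ] ℝ) :=
  (LinearEquiv.congrRight (eqCLM3 (V := V))).trans LinearMap.toContinuousLinearMap

noncomputable def toCLM4 (Rm : V →ₗ[ℝ] V →ₗ[ℝ] V →ₗ[ℝ] V →ₗ[ℝ] ℝ) :
    V →L[ℝ] V →L[ℝ] V →L[ℝ] V →L[ℝ] ℝ := eqCLM4 Rm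

@[simp] lemma toCLM4_apply (Rm : V →ₗ[ℝ] V →ₗ[ℝ] V →ₗ[ℝ] V →ₗ[ℝ] ℝ) (v w x y : V) :
    toCLM4 Rm v w x y = Rm v w x y := by
  simp [toCLM4, eqCLM4, eqCLM3, eqCLM2, eqCLM1, LinearEquiv.congrRight]

lemma hasDerivAt4 (Rm : V →ₗ[ℝ] V →ₗ[ℝ] V →ₗ[ℝ] V →ₗ[ℝ] ℝ)
    {v w : ℝ → V} {v' w' : V} (hv : HasDerivAt v v' 0) (hw : HasDerivAt w w' 0) :
    HasDerivAt (fun t => Rm (v t) (w t) (v t) (w t))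
      (Rm v' (w 0) (v 0) (w 0) + Rm (v 0) w' (v 0) (w 0)
        + Rm (v 0) (w 0) v' (w 0) + Rm (v 0) (w 0) (v 0) w') 0 := by
  have h1 : HasDerivAt (fun t => toCLM4 Rm (v t)) (toCLM4 Rm v') 0 :=
    ((toCLM4 Rm).hasFDerivAt.comp_hasDerivAt 0 hv)
  have h2 := h1.clm_apply hw
  have h3 := h2.clm_apply hv
  have h4 := h3.clm_apply hw
  have heq : (fun t => toCLM4 Rm (v t) (w t) (v t) (w t))
      = fun t => Rm (v t) (w t) (v t) (w t) := by ext t; simp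
  rw [heq] at h4
  convert h4 using 1
  all_goals rfl

omit [FiniteDimensional ℝ V] in
lemma inner_deriv_zero {v : ℝ → V} {v' : V} (hv : HasDerivAt v v' 0)
    (h : ∀ t, ⟪v t, v t⟫ = 1) : ⟪v', v 0⟫ = 0 := by
  have hd : HasDerivAt (fun t => ⟪v t, v t⟫) (⟪v 0, v'⟫ + ⟪v', v 0⟫) 0 := hv.inner ℝ hv
  have hc : HasDerivAt (fun _ : ℝ => (1 : ℝ)) 0 0 := hasDerivAt_const 0 1
  have heq : (fun t => ⟪v t, v t⟫) = fun _ : ℝ => (1 : ℝ) := funext h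
  rw [heq] at hd
  have h0 := hd.unique hc
  have h1 := real_inner_comm (v 0) v'
  linarith

end Aux

theorem stmt_8 {V : Type*} [NormedAddCommGroup V] [InnerProductSpace ℝ V]
    [FiniteDimensional ℝ V] {n : ℕ} (hn : 3 ≤ n)
    (hdim : Module.finrank ℝ V = n)
    (Rm : V →ₗ[ℝ] V →ₗ[ℝ] V →ₗ[ℝ] V →ₗ[ℝ] ℝ)
    (hsk1 : ∀ v w x y, Rm v w x y = -Rm w v x y)
    (hsk2 : ∀ v w x y, Rm v w x y = -Rm v w y x)
    (hpair : ∀ v w x y, Rm v w x y = Rm x y v w)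
    (hbianchi : ∀ v w x y, Rm v w x y + Rm w x v y + Rm x v w y = 0)
    (e : Fin n → V) (he : Orthonormal ℝ e)
    (e1 : Fin n) (e2 : Fin n) (he1 : e1 = ⟨0, by omega⟩) (he2 : e2 = ⟨1, by omega⟩) :
    (∀ v w : ℝ → V, Differentiable ℝ v → Differentiable ℝ w →
        v 0 = e e1 → w 0 = e e2 →
        (∀ t, ⟪v t, v t⟫ = 1) → (∀ t, ⟪w t, w t⟫ = 1) → (∀ t, ⟪v t, w t⟫ = 0) →
        deriv (fun t => Rm (v t) (w t) (v t) (w t)) 0 = 0) ↔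
      (∀ i : Fin n, i ≠ e1 → i ≠ e2 →
        Rm (e e1) (e e2) (e i) (e e2) = 0 ∧ Rm (e e1) (e e2) (e e1) (e i) = 0) := by
  have hip : ∀ j k, ⟪e j, e k⟫ = if j = k then (1:ℝ) else 0 := orthonormal_iff_ite.mp he
  have h12 : e1 ≠ e2 := by rw [he1, he2]; exact Fin.ne_of_val_ne (by norm_num)
  have hRmzz : ∀ a b c : V, Rm a b c c = 0 := fun a b c => by have := hsk2 a b c c; linarith
  have hRmaa : ∀ a c d : V, Rm a a c d = 0 := fun a c d => by have := hsk1 a a c d; linarith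
  constructor
  · intro H i hi1 hi2
    have hi1' : e1 ≠ i := hi1.symm
    have hi2' : e2 ≠ i := hi2.symm
    constructor
    · -- curve in v
      set v : ℝ → V := fun t => Real.cos t • e e1 + Real.sin t • e i with hvdef
      have hv' : ∀ t : ℝ, HasDerivAt v (-Real.sin t • e e1 + Real.cos t • e i) t := fun t =>
        ((Real.hasDerivAt_cos t).smul_const (e e1)).add ((Real.hasDerivAt_sin t).smul_const (e i))
      have hv0 : v 0 = e e1 := by simp [hvdef]
      have hva : HasDerivAt v (e i) 0 := by simpa using hv' 0
      have hdiff : Differentiable ℝ v := fun t => (hv' t).differentiableAt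
      have hvv : ∀ t, ⟪v t, v t⟫ = 1 := by
        intro t
        simp only [hvdef, inner_add_left, inner_add_right, real_inner_smul_left,
          real_inner_smul_right, hip, if_pos rfl, if_neg hi1', if_neg hi1, if_true,
          eq_self_iff_true, mul_one, one_mul, mul_zero, zero_mul, add_zero, zero_add]
        have := Real.sin_sq_add_cos_sq t
        nlinarith
      have hvw : ∀ t, ⟪v t, e e2⟫ = 0 := by
        intro t
        simp [hvdef, inner_add_left, real_inner_smul_left, hip, h12, hi2]
      have hD := hasDerivAt4 Rm hva (hasDerivAt_const (0:ℝ) (e e2))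
      rw [hv0] at hD
      have hder := H v (fun _ => e e2) hdiff (differentiable_const _) hv0 rfl hvv
        (fun t => by simp [hip, he.1]) hvw
      rw [hD.deriv] at hder
      simp only [map_zero, LinearMap.zero_apply] at hder
      have hp := hpair (e i) (e e2) (e e1) (e e2)
      linarith
    · -- curve in w
      set w : ℝ → V := fun t => Real.cos t • e e2 + Real.sin t • e i with hwdef
      have hw' : ∀ t : ℝ, HasDerivAt w (-Real.sin t • e e2 + Real.cos t • e i) t := fun t =>
        ((Real.hasDerivAt_cos t).smul_const (e e2)).add ((Real.hasDerivAt_sin t).smul_const (e i))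
      have hw0 : w 0 = e e2 := by simp [hwdef]
      have hwa : HasDerivAt w (e i) 0 := by simpa using hw' 0
      have hdiff : Differentiable ℝ w := fun t => (hw' t).differentiableAt
      have hww : ∀ t, ⟪w t, w t⟫ = 1 := by
        intro t
        simp only [hwdef, inner_add_left, inner_add_right, real_inner_smul_left,
          real_inner_smul_right, hip, if_pos rfl, if_neg hi2', if_neg hi2, if_true,
          eq_self_iff_true, mul_one, one_mul, mul_zero, zero_mul, add_zero, zero_add]
        have := Real.sin_sq_add_cos_sq t
        nlinarith
      have hvw : ∀ t, ⟪e e1, w t⟫ = 0 := by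
        intro t
        simp [hwdef, inner_add_right, real_inner_smul_right, hip, h12, hi1.symm]
      have hD := hasDerivAt4 Rm (hasDerivAt_const (0:ℝ) (e e1)) hwa
      rw [hw0] at hD
      have hder := H (fun _ => e e1) w (differentiable_const _) hdiff rfl hw0
        (fun t => by simp [hip, he.1]) hww hvw
      rw [hD.deriv] at hder
      simp only [map_zero, LinearMap.zero_apply] at hder
      have hp := hpair (e e1) (e i) (e e1) (e e2)
      linarith
  · intro H v w hv hw hv0 hw0 hvv hww hvw
    have hva : HasDerivAt v (deriv v 0) 0 := (hv 0).hasDerivAt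
    have hwa : HasDerivAt w (deriv w 0) 0 := (hw 0).hasDerivAt
    set v' := deriv v 0
    set w' := deriv w 0
    have hD := hasDerivAt4 Rm hva hwa
    rw [hv0, hw0] at hD
    rw [hD.deriv]
    -- orthogonality of derivatives
    have h1 : ⟪v', e e1⟫ = 0 := by have := inner_deriv_zero hva hvv; rwa [hv0] at this
    have h2 : ⟪w', e e2⟫ = 0 := by have := inner_deriv_zero hwa hww; rwa [hw0] at this
    -- orthonormal basis expansion
    have hcard : Fintype.card (Fin n) = Module.finrank ℝ V := by simp [hdim]
    haveI : Nonempty (Fin n) := ⟨⟨0, by omega⟩⟩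
    let b : Module.Basis (Fin n) ℝ V :=
      basisOfLinearIndependentOfCardEqFinrank he.linearIndependent hcard
    have hbe : ⇑b = e := coe_basisOfLinearIndependentOfCardEqFinrank he.linearIndependent hcard
    let ob : OrthonormalBasis (Fin n) ℝ V := b.toOrthonormalBasis (by rwa [hbe])
    have hobe : ⇑ob = e := by rw [Module.Basis.coe_toOrthonormalBasis, hbe]
    have hexp : ∀ x : V, (∑ j, ⟪e j, x⟫ • e j) = x := by
      intro x
      have := ob.sum_repr' x
      simpa [hobe] using this
    have hC : Rm (e e1) (e e2) v' (e e2) = 0 := by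
      rw [← hexp v']
      simp only [map_sum, map_smul, LinearMap.coe_sum, Finset.sum_apply,
        LinearMap.smul_apply, smul_eq_mul]
      apply Finset.sum_eq_zero
      intro j _
      rcases eq_or_ne j e1 with rfl | hj1
      · have : ⟪e j, v'⟫ = 0 := by rw [real_inner_comm]; exact h1
        simp [this]
      rcases eq_or_ne j e2 with rfl | hj2
      · simp [hRmzz]
      · simp [(H j hj1 hj2).1]
    have hDD : Rm (e e1) (e e2) (e e1) w' = 0 := by
      rw [← hexp w', map_sum]
      simp only [map_smul, smul_eq_mul]
      apply Finset.sum_eq_zero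
      intro j _
      rcases eq_or_ne j e2 with rfl | hj2
      · have : ⟪e j, w'⟫ = 0 := by rw [real_inner_comm]; exact h2
        simp [this]
      rcases eq_or_ne j e1 with rfl | hj1
      · simp [hRmzz]
      · simp [(H j hj1 hj2).2]
    have hA : Rm v' (e e2) (e e1) (e e2) = 0 := by rw [hpair]; exact hC
    have hB : Rm (e e1) w' (e e1) (e e2) = 0 := by rw [hpair]; exact hDD
    rw [hA, hB, hC, hDD]; ring
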